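/- Let f : ℝ → ℝ be an SD map. Then f is the identity map: f(x) = x for all x in ℝ. No continuity assumption is required. -/

import Mathlib

/-- A function `f : F → F` on a field `F` is an *SD map* if for all `x ≠ y` one has
`f x ≠ f y` and `f ((x+y)/(x-y)) = (f x + f y) / (f x - f y)`. -/
def IsSDMap {F : Type*} [Field F] (f : F → F) : Prop :=
  ∀ ⦃x y : F⦄, x ≠ y →
    f x ≠ f y ∧ f ((x + y) / (x - y)) = (f x + f y) / (f x - f y)

section SDAux

/-- Monotone additive maps `ℝ → ℝ` are linear. -/
lemma sd_cauchy (g : ℝ →+ ℝ) (hm : Monotone g) (t : ℝ) : g t = g 1 * t := by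
  have hq : ∀ q : ℚ, g (q : ℝ) = g 1 * q := by
    intro q
    have h := map_ratCast_smul g ℝ ℝ q (1 : ℝ)
    simpa [mul_comm] using h
  have hk0 : 0 ≤ g 1 := by
    have h := hm (show (0:ℝ) ≤ 1 by norm_num)
    simpa using h
  rcases eq_or_lt_of_le hk0 with hk | hk
  · obtain ⟨q1, hq1⟩ := exists_rat_lt t
    obtain ⟨q2, hq2⟩ := exists_rat_gt t
    have h1 := hm hq1.le
    have h2 := hm hq2.le
    rw [hq q1, ← hk] at h1
    rw [hq q2, ← hk] at h2
    rw [← hk]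
    simp only [zero_mul] at h1 h2 ⊢
    linarith
  · have hle : g t ≤ g 1 * t := by
      by_contra h
      push_neg at h
      have ht : t < g t / g 1 := (lt_div_iff₀ hk).2 (by nlinarith)
      obtain ⟨q, hq1, hq2⟩ := exists_rat_btwn ht
      have hm1 := hm hq1.le
      rw [hq q] at hm1
      have hm2 : (q : ℝ) * g 1 < g t := (lt_div_iff₀ hk).1 hq2
      nlinarith
    have hge : g 1 * t ≤ g t := by
      by_contra h
      push_neg at h
      have ht : g t / g 1 < t := (div_lt_iff₀ hk).2 (by nlinarith)
      obtain ⟨q, hq1, hq2⟩ := exists_rat_btwn ht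
      have hm1 := hm hq2.le
      rw [hq q] at hm1
      have hm2 : g t < (q : ℝ) * g 1 := (div_lt_iff₀ hk).1 hq1
      nlinarith
    linarith

variable {f : ℝ → ℝ} (hf : IsSDMap f)
include hf

lemma sd_key {x : ℝ} (hx : x ≠ 0) : f x * (f 1 - 1) = f 0 * (f 1 + 1) := by
  obtain ⟨hne, heq⟩ := hf hx
  have h1 : (x + 0) / (x - 0) = 1 := by rw [add_zero, sub_zero, div_self hx]
  rw [h1] at heq
  have hd : f x - f 0 ≠ 0 := sub_ne_zero.mpr hne
  rw [eq_div_iff hd] at heq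
  linear_combination heq

lemma sd_one : f 1 = 1 := by
  by_contra h
  have h2 := sd_key hf (show (2:ℝ) ≠ 0 by norm_num)
  have h3 := sd_key hf (show (3:ℝ) ≠ 0 by norm_num)
  have hne := (hf (show (2:ℝ) ≠ 3 by norm_num)).1
  have h1 : f 1 - 1 ≠ 0 := sub_ne_zero.mpr h
  exact hne (mul_right_cancel₀ h1 (h2.trans h3.symm))

lemma sd_zero : f 0 = 0 := by
  have h1 := sd_key hf one_ne_zero
  rw [sd_one hf] at h1
  linarith

lemma sd_odd (x : ℝ) : f (-x) = - f x := by
  rcases eq_or_ne x 0 with rfl | hx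
  · simp [sd_zero hf]
  · obtain ⟨hne, heq⟩ := hf (show x ≠ -x from fun h => hx (by linarith))
    have h1 : (x + -x) / (x - -x) = 0 := by
      rw [add_neg_cancel, zero_div]
    rw [h1, sd_zero hf] at heq
    have hd : f x - f (-x) ≠ 0 := sub_ne_zero.mpr hne
    rw [eq_comm, div_eq_iff hd] at heq
    linarith

lemma sd_ratio {x y z : ℝ} (hxy : x ≠ y) (hz : z ≠ 0) :
    f y * f (x * z) = f x * f (y * z) := by
  obtain ⟨hne1, heq1⟩ := hf hxy
  have hxyz : x * z ≠ y * z := fun h => hxy (mul_right_cancel₀ hz h)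
  obtain ⟨hne2, heq2⟩ := hf hxyz
  have hxy' : x - y ≠ 0 := sub_ne_zero.mpr hxy
  have hxyz' : x * z - y * z ≠ 0 := sub_ne_zero.mpr hxyz
  have harg : (x * z + y * z) / (x * z - y * z) = (x + y) / (x - y) := by
    rw [div_eq_div_iff hxyz' hxy']; ring
  rw [harg, heq1] at heq2
  have hd1 : f x - f y ≠ 0 := sub_ne_zero.mpr hne1
  have hd2 : f (x * z) - f (y * z) ≠ 0 := sub_ne_zero.mpr hne2
  rw [div_eq_div_iff hd1 hd2] at heq2
  linear_combination heq2 / 2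

lemma sd_mul (x z : ℝ) : f (x * z) = f x * f z := by
  rcases eq_or_ne z 0 with rfl | hz
  · simp [sd_zero hf]
  rcases eq_or_ne x 1 with rfl | hx
  · simp [sd_one hf]
  · have h := sd_ratio hf (show x ≠ 1 from hx) hz
    rwa [sd_one hf, one_mul, one_mul] at h

lemma sd_ne_zero {x : ℝ} (hx : x ≠ 0) : f x ≠ 0 := by
  have h := (hf hx).1
  rwa [sd_zero hf] at h

lemma sd_pos {x : ℝ} (hx : 0 < x) : 0 < f x := by
  have hs : Real.sqrt x ≠ 0 := by positivity
  have h := sd_mul hf (Real.sqrt x) (Real.sqrt x)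
  rw [Real.mul_self_sqrt hx.le] at h
  rw [h]
  exact mul_self_pos.mpr (sd_ne_zero hf hs)

lemma sd_gt_one {x : ℝ} (hx : 1 < x) : 1 < f x := by
  obtain ⟨hne, heq⟩ := hf (show x ≠ 1 from ne_of_gt hx)
  rw [sd_one hf] at hne heq
  have hargpos : 0 < (x + 1) / (x - 1) := by
    apply div_pos <;> linarith
  have hL : 0 < (f x + 1) / (f x - 1) := heq ▸ sd_pos hf hargpos
  have hfx : 0 < f x := sd_pos hf (by linarith)
  by_contra h
  push_neg at h
  have h1 : f x - 1 < 0 := lt_of_le_of_ne (by linarith) (sub_ne_zero.mpr hne)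
  have h2 := div_neg_of_pos_of_neg (show (0:ℝ) < f x + 1 by linarith) h1
  linarith

lemma sd_mono : StrictMono f := by
  have hpp : ∀ a b : ℝ, 0 < a → a < b → f a < f b := by
    intro a b ha hab
    have h1 : 1 < b / a := (one_lt_div ha).mpr hab
    have h2 := sd_gt_one hf h1
    have h3 : f b = f (b / a) * f a := by
      rw [← sd_mul hf, div_mul_cancel₀]
      exact ne_of_gt ha
    rw [h3]
    nlinarith [sd_pos hf ha]
  intro a b hab
  rcases lt_trichotomy a 0 with ha | rfl | ha
  · rcases lt_trichotomy b 0 with hb | rfl | hb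
    · have h := hpp (-b) (-a) (by linarith) (by linarith)
      rw [sd_odd hf, sd_odd hf] at h
      linarith
    · rw [sd_zero hf]
      have h : 0 < f (-a) := sd_pos hf (by linarith)
      rw [sd_odd hf] at h
      linarith
    · have h1 : 0 < f (-a) := sd_pos hf (by linarith)
      have h2 : 0 < f b := sd_pos hf hb
      rw [sd_odd hf] at h1
      linarith
  · rw [sd_zero hf]
    exact sd_pos hf hab
  · exact hpp a b ha hab

lemma sd_pow {x : ℝ} (hx : 0 < x) : f x = x ^ Real.log (f (Real.exp 1)) := by
  set k := Real.log (f (Real.exp 1)) with hk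
  have hadd : ∀ a b : ℝ, Real.log (f (Real.exp (a + b)))
      = Real.log (f (Real.exp a)) + Real.log (f (Real.exp b)) := by
    intro a b
    rw [Real.exp_add, sd_mul hf, Real.log_mul
      (ne_of_gt (sd_pos hf (Real.exp_pos a)))
      (ne_of_gt (sd_pos hf (Real.exp_pos b)))]
  let g : ℝ →+ ℝ := AddMonoidHom.mk' (fun t => Real.log (f (Real.exp t))) hadd
  have hmono : Monotone g := by
    intro a b hab
    rcases eq_or_lt_of_le hab with rfl | h
    · exact le_rfl
    · exact (Real.log_le_log (sd_pos hf (Real.exp_pos a))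
        (sd_mono hf (Real.exp_lt_exp.2 h)).le)
  have hg := sd_cauchy g hmono (Real.log x)
  have hg1 : g 1 = k := rfl
  have hlog : Real.log (f (Real.exp (Real.log x))) = k * Real.log x := by
    rw [← hg1]; exact hg
  rw [Real.exp_log hx] at hlog
  have hfx : 0 < f x := sd_pos hf hx
  rw [Real.rpow_def_of_pos hx, ← Real.exp_log hfx, hlog, mul_comm]

end SDAux

theorem sd_map_real_eq_id (f : ℝ → ℝ) (hf : IsSDMap f) : ∀ x : ℝ, f x = x := by
  set k := Real.log (f (Real.exp 1)) with hkdef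
  have h2 : f 2 = (2:ℝ) ^ k := sd_pow hf (by norm_num)
  have h3 : f 3 = (3:ℝ) ^ k := sd_pow hf (by norm_num)
  have hrel : f 2 * (f 3 - 1) = f 3 + 1 := by
    obtain ⟨hne, heq⟩ := hf (show (3:ℝ) ≠ 1 by norm_num)
    rw [sd_one hf] at hne heq
    have harg : ((3:ℝ) + 1) / (3 - 1) = 2 := by norm_num
    rw [harg] at heq
    have hd : f 3 - 1 ≠ 0 := sub_ne_zero.mpr hne
    rw [eq_div_iff hd] at heq
    exact heq
  have hk0 : 0 < k := by
    have h21 : 1 < f 2 := sd_gt_one hf (by norm_num)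
    rw [h2] at h21
    by_contra hk
    push_neg at hk
    have h := Real.rpow_le_rpow_of_exponent_le (show (1:ℝ) ≤ 2 by norm_num) hk
    rw [Real.rpow_zero] at h
    linarith
  have b2 : 1 < (2:ℝ) ^ k := by
    have h := Real.rpow_lt_rpow_of_exponent_lt (show (1:ℝ) < 2 by norm_num) hk0
    rwa [Real.rpow_zero] at h
  have b3 : 1 < (3:ℝ) ^ k := by
    have h := Real.rpow_lt_rpow_of_exponent_lt (show (1:ℝ) < 3 by norm_num) hk0
    rwa [Real.rpow_zero] at h
  have hk1 : k = 1 := by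
    by_contra hk
    rw [h2, h3] at hrel
    rcases lt_or_gt_of_ne hk with h | h
    · have a2 : (2:ℝ) ^ k < 2 := by
        have hh := Real.rpow_lt_rpow_of_exponent_lt (show (1:ℝ) < 2 by norm_num) h
        rwa [Real.rpow_one] at hh
      have a3 : (3:ℝ) ^ k < 3 := by
        have hh := Real.rpow_lt_rpow_of_exponent_lt (show (1:ℝ) < 3 by norm_num) h
        rwa [Real.rpow_one] at hh
      nlinarith [mul_lt_mul_of_pos_right (show (2:ℝ)^k - 1 < 1 by linarith)
        (show (0:ℝ) < (3:ℝ)^k - 1 by linarith)]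
    · have a2 : 2 < (2:ℝ) ^ k := by
        have hh := Real.rpow_lt_rpow_of_exponent_lt (show (1:ℝ) < 2 by norm_num) h
        rwa [Real.rpow_one] at hh
      have a3 : 3 < (3:ℝ) ^ k := by
        have hh := Real.rpow_lt_rpow_of_exponent_lt (show (1:ℝ) < 3 by norm_num) h
        rwa [Real.rpow_one] at hh
      nlinarith [mul_lt_mul_of_pos_right (show (1:ℝ) < (2:ℝ)^k - 1 by linarith)
        (show (0:ℝ) < (3:ℝ)^k - 1 by linarith)]
  have key : ∀ y : ℝ, 0 < y → f y = y := by
    intro y hy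
    rw [sd_pow hf hy, ← hkdef, hk1, Real.rpow_one]
  intro x
  rcases lt_trichotomy x 0 with h | rfl | h
  · have h1 := key (-x) (by linarith)
    have h2 := sd_odd hf x
    rw [h1] at h2
    linarith
  · exact sd_zero hf
  · exact key x h
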